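/- Generalized Second Law with memory: let ρ_{SRM} = ρ_{SM} ⊗ ρ_R be a state of three finite-dimensional systems with the reservoir R uncorrelated, and let ρ'_{SRM} = U ρ_{SRM} U† for a unitary U. If S(ρ'_M) ≤ S(ρ_M), then the reservoir entropy increase Δ = S(ρ'_R) − S(ρ_R) satisfies Δ ≥ ΔS_cond + I(S'M':R') ≥ ΔS_cond, where ΔS_cond := S(S|M)_{ρ_{SM}} − S(S'|M')_{ρ'_{SM}} is the decrease of conditional entropy. -/

import Mathlib

open scoped Kronecker ComplexOrder
open Matrix

noncomputable def matfun {n : Type*} [Fintype n] [DecidableEq n] (f : ℝ → ℝ)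
    (A : Matrix n n ℂ) : Matrix n n ℂ :=
  if h : A.IsHermitian then
    (h.eigenvectorUnitary : Matrix n n ℂ) * Matrix.diagonal (fun i => (f (h.eigenvalues i) : ℂ)) *
      (star (h.eigenvectorUnitary : Matrix n n ℂ))
  else 0

noncomputable def mlog {n : Type*} [Fintype n] [DecidableEq n] (A : Matrix n n ℂ) : Matrix n n ℂ :=
  matfun Real.log A

noncomputable def mexp {n : Type*} [Fintype n] [DecidableEq n] (β : ℝ) (H : Matrix n n ℂ) : Matrix n n ℂ :=
  matfun (fun x => Real.exp (-β * x)) H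

noncomputable def gibbs {n : Type*} [Fintype n] [DecidableEq n] (β : ℝ) (H : Matrix n n ℂ) : Matrix n n ℂ :=
  ((mexp β H).trace)⁻¹ • mexp β H

noncomputable def entropy {n : Type*} [Fintype n] [DecidableEq n] (ρ : Matrix n n ℂ) : ℝ :=
  -((ρ * mlog ρ).trace).re

noncomputable def relEnt {n : Type*} [Fintype n] [DecidableEq n] (σ ρ : Matrix n n ℂ) : ℝ :=
  ((σ * (mlog σ - mlog ρ)).trace).re

def IsState {n : Type*} [Fintype n] (ρ : Matrix n n ℂ) : Prop := ρ.PosSemidef ∧ ρ.trace = 1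

noncomputable def trR {a b : Type*} [Fintype a] [Fintype b]
    (ρ : Matrix (a × b) (a × b) ℂ) : Matrix a a ℂ :=
  Matrix.of fun i j => ∑ k, ρ (i, k) (j, k)

noncomputable def trL {a b : Type*} [Fintype a] [Fintype b]
    (ρ : Matrix (a × b) (a × b) ℂ) : Matrix b b ℂ :=
  Matrix.of fun i j => ∑ k, ρ (k, i) (k, j)

noncomputable def mutInfo {a b : Type*} [Fintype a] [Fintype b] [DecidableEq a] [DecidableEq b]
    (ρ : Matrix (a × b) (a × b) ℂ) : ℝ :=
  entropy (trR ρ) + entropy (trL ρ) - entropy ρ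





section FC
variable {n : Type*} [Fintype n] [DecidableEq n]

lemma isHermitian_of_decomp {A W : Matrix n n ℂ} {μ : n → ℝ}
    (hdec : A = W * Matrix.diagonal (fun i => (μ i : ℂ)) * star W) : A.IsHermitian := by
  rw [hdec]
  unfold Matrix.IsHermitian
  rw [conjTranspose_mul, conjTranspose_mul, diagonal_conjTranspose]
  simp [mul_assoc, Matrix.star_eq_conjTranspose, Pi.star_def]

lemma matfun_decomp (f : ℝ → ℝ) {A W : Matrix n n ℂ} {μ : n → ℝ}
    (hW1 : star W * W = 1) (hW2 : W * star W = 1)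
    (hdec : A = W * Matrix.diagonal (fun i => (μ i : ℂ)) * star W) :
    matfun f A = W * Matrix.diagonal (fun i => (f (μ i) : ℂ)) * star W := by
  have hA : A.IsHermitian := isHermitian_of_decomp hdec
  rw [matfun, dif_pos hA]
  set V : Matrix n n ℂ := (hA.eigenvectorUnitary : Matrix n n ℂ) with hV
  have hV1 : star V * V = 1 := Unitary.coe_star_mul_self hA.eigenvectorUnitary
  have hV2 : V * star V = 1 := Unitary.coe_mul_star_self hA.eigenvectorUnitary
  have hspec : A = V * Matrix.diagonal (fun i => ((hA.eigenvalues i : ℝ) : ℂ)) * star V := by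
    simpa [Function.comp_def] using hA.spectral_theorem
  set M : Matrix n n ℂ := star V * W with hM
  have hkey : Matrix.diagonal (fun i => ((hA.eigenvalues i : ℝ) : ℂ)) * M
      = M * Matrix.diagonal (fun i => ((μ i : ℝ) : ℂ)) := by
    have h1 := congrArg (fun X => star V * X * W) hspec
    have h2 := congrArg (fun X => star V * X * W) hdec
    rw [show star V * ((V * Matrix.diagonal (fun i => ((hA.eigenvalues i : ℝ) : ℂ))) * star V) * W
        = (star V * V) * Matrix.diagonal (fun i => ((hA.eigenvalues i : ℝ) : ℂ)) * (star V * W) by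
          simp only [Matrix.mul_assoc], hV1, Matrix.one_mul] at h1
    rw [show star V * ((W * Matrix.diagonal (fun i => ((μ i : ℝ) : ℂ))) * star W) * W
        = (star V * W) * Matrix.diagonal (fun i => ((μ i : ℝ) : ℂ)) * (star W * W) by
          simp only [Matrix.mul_assoc], hW1, Matrix.mul_one] at h2
    rw [hM, ← h1, h2]
  have hkeyf : Matrix.diagonal (fun i => ((f (hA.eigenvalues i) : ℝ) : ℂ)) * M
      = M * Matrix.diagonal (fun i => ((f (μ i) : ℝ) : ℂ)) := by
    ext i j
    have heq := Matrix.ext_iff.mpr hkey i j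
    simp only [Matrix.diagonal_mul, Matrix.mul_diagonal] at heq ⊢
    by_cases hMij : M i j = 0
    · simp [hMij]
    · have hc : (hA.eigenvalues i : ℂ) = (μ j : ℂ) := by
        rw [mul_comm (M i j)] at heq
        exact mul_right_cancel₀ hMij heq
      have : hA.eigenvalues i = μ j := by exact_mod_cast hc
      rw [this, mul_comm]
  calc V * Matrix.diagonal (fun i => ((f (hA.eigenvalues i) : ℝ) : ℂ)) * star V
      = V * (Matrix.diagonal (fun i => ((f (hA.eigenvalues i) : ℝ) : ℂ)) * M) * star W := by
        rw [hM]
        rw [show V * (Matrix.diagonal (fun i => ((f (hA.eigenvalues i) : ℝ) : ℂ)) * (star V * W)) * star W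
          = (V * Matrix.diagonal (fun i => ((f (hA.eigenvalues i) : ℝ) : ℂ)) * star V) * (W * star W) by
            simp only [Matrix.mul_assoc], hW2, Matrix.mul_one]
    _ = W * Matrix.diagonal (fun i => ((f (μ i) : ℝ) : ℂ)) * star W := by
        rw [hkeyf, hM]
        rw [show V * (star V * W * Matrix.diagonal (fun i => ((f (μ i) : ℝ) : ℂ))) * star W
          = (V * star V) * (W * Matrix.diagonal (fun i => ((f (μ i) : ℝ) : ℂ)) * star W) by
            simp only [Matrix.mul_assoc], hV2, Matrix.one_mul]

end FC

lemma sum_swap3 {α β γ : Type*} [Fintype α] [Fintype β] [Fintype γ] {M : Type*} [AddCommMonoid M]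
    (f : α → β → γ → M) : ∑ i, ∑ j, ∑ k, f i j k = ∑ k, ∑ i, ∑ j, f i j k :=
  calc ∑ i, ∑ j, ∑ k, f i j k = ∑ i, ∑ k, ∑ j, f i j k :=
        Finset.sum_congr rfl fun _ _ => Finset.sum_comm
  _ = ∑ k, ∑ i, ∑ j, f i j k := Finset.sum_comm




section Entropy
variable {n : Type*} [Fintype n] [DecidableEq n]

lemma trace_conj {W X : Matrix n n ℂ} (hW1 : star W * W = 1) :
    (W * X * star W).trace = X.trace := by
  rw [Matrix.trace_mul_cycle, hW1, Matrix.one_mul]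

lemma entropy_formula {A W : Matrix n n ℂ} {μ : n → ℝ}
    (hW1 : star W * W = 1) (hW2 : W * star W = 1)
    (hdec : A = W * Matrix.diagonal (fun i => (μ i : ℂ)) * star W) :
    entropy A = -∑ i, μ i * Real.log (μ i) := by
  have hm : mlog A = W * Matrix.diagonal (fun i => ((Real.log (μ i) : ℝ) : ℂ)) * star W :=
    matfun_decomp Real.log hW1 hW2 hdec
  have hprod : A * mlog A
      = W * Matrix.diagonal (fun i => ((μ i : ℂ) * (Real.log (μ i) : ℂ))) * star W := by
    rw [hm, hdec]
    rw [show W * Matrix.diagonal (fun i => ((μ i : ℝ) : ℂ)) * star W *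
        (W * Matrix.diagonal (fun i => ((Real.log (μ i) : ℝ) : ℂ)) * star W)
        = W * (Matrix.diagonal (fun i => ((μ i : ℝ) : ℂ)) * ((star W * W) *
          Matrix.diagonal (fun i => ((Real.log (μ i) : ℝ) : ℂ)))) * star W by
        simp only [Matrix.mul_assoc], hW1, Matrix.one_mul, Matrix.diagonal_mul_diagonal]
  rw [entropy, hprod, trace_conj hW1, Matrix.trace_diagonal]
  rw [Complex.re_sum]
  congr 1
  apply Finset.sum_congr rfl
  intro i _
  rw [← Complex.ofReal_mul, Complex.ofReal_re]

lemma entropy_conj {A W U : Matrix n n ℂ} {μ : n → ℝ}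
    (hW1 : star W * W = 1) (hW2 : W * star W = 1)
    (hU1 : star U * U = 1) (hU2 : U * star U = 1)
    (hdec : A = W * Matrix.diagonal (fun i => (μ i : ℂ)) * star W) :
    entropy (U * A * star U) = entropy A := by
  have hd2 : U * A * star U = (U * W) * Matrix.diagonal (fun i => (μ i : ℂ)) * star (U * W) := by
    rw [hdec, Matrix.star_mul]
    simp only [Matrix.mul_assoc]
  rw [entropy_formula (W := U * W) (μ := μ) ?h1 ?h2 hd2, entropy_formula hW1 hW2 hdec]
  case h1 =>
    rw [Matrix.star_mul]
    calc star W * star U * (U * W) = star W * ((star U * U) * W) := by simp only [Matrix.mul_assoc]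
    _ = 1 := by rw [hU1, Matrix.one_mul, hW1]
  case h2 =>
    rw [Matrix.star_mul]
    calc U * W * (star W * star U) = U * ((W * star W) * star U) := by simp only [Matrix.mul_assoc]
    _ = 1 := by rw [hW2, Matrix.one_mul, hU2]

/-- spectral decomposition packaged -/
lemma spectral_decomp {A : Matrix n n ℂ} (hA : A.IsHermitian) :
    A = (hA.eigenvectorUnitary : Matrix n n ℂ) *
      Matrix.diagonal (fun i => ((hA.eigenvalues i : ℝ) : ℂ)) *
      star (hA.eigenvectorUnitary : Matrix n n ℂ) := by
  simpa [Function.comp_def] using hA.spectral_theorem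

lemma star_mul_self_eigU {A : Matrix n n ℂ} (hA : A.IsHermitian) :
    star (hA.eigenvectorUnitary : Matrix n n ℂ) * (hA.eigenvectorUnitary : Matrix n n ℂ) = 1 :=
  Unitary.coe_star_mul_self hA.eigenvectorUnitary

lemma mul_star_self_eigU {A : Matrix n n ℂ} (hA : A.IsHermitian) :
    (hA.eigenvectorUnitary : Matrix n n ℂ) * star (hA.eigenvectorUnitary : Matrix n n ℂ) = 1 :=
  Unitary.coe_mul_star_self hA.eigenvectorUnitary

lemma entropy_eq_sum {A : Matrix n n ℂ} (hA : A.IsHermitian) :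
    entropy A = -∑ i, hA.eigenvalues i * Real.log (hA.eigenvalues i) :=
  entropy_formula (star_mul_self_eigU hA) (mul_star_self_eigU hA) (spectral_decomp hA)

lemma sum_eigenvalues_eq_trace {A : Matrix n n ℂ} (hA : A.IsHermitian) :
    (∑ i, hA.eigenvalues i : ℝ) = A.trace.re := by
  have := congrArg Matrix.trace (spectral_decomp hA)
  rw [trace_conj (star_mul_self_eigU hA), Matrix.trace_diagonal] at this
  rw [this, Complex.re_sum]
  simp

end Entropy

lemma neg_sum_mulLog {ι : Type*} [Fintype ι] (μ : ι → ℝ) :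
    -∑ i, μ i * Real.log (μ i) = ∑ i, Real.negMulLog (μ i) := by
  rw [← Finset.sum_neg_distrib]
  exact Finset.sum_congr rfl fun p _ => (neg_mul _ _).symm

section Kron
variable {a b : Type*} [Fintype a] [Fintype b] [DecidableEq a] [DecidableEq b]

omit [Fintype a] [Fintype b] [DecidableEq a] [DecidableEq b] in
lemma star_kronecker (A : Matrix a a ℂ) (B : Matrix b b ℂ) :
    star (A ⊗ₖ B) = star A ⊗ₖ star B := by
  ext ⟨i, j⟩ ⟨k, l⟩
  simp only [Matrix.star_eq_conjTranspose, Matrix.conjTranspose_apply,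
    Matrix.kroneckerMap_apply, star_mul']

lemma kron_unitary_left {A : Matrix a a ℂ} {B : Matrix b b ℂ}
    (hA : star A * A = 1) (hB : star B * B = 1) : star (A ⊗ₖ B) * (A ⊗ₖ B) = 1 := by
  rw [star_kronecker, ← Matrix.mul_kronecker_mul, hA, hB, Matrix.one_kronecker_one]

lemma kron_unitary_right {A : Matrix a a ℂ} {B : Matrix b b ℂ}
    (hA : A * star A = 1) (hB : B * star B = 1) : (A ⊗ₖ B) * star (A ⊗ₖ B) = 1 := by
  rw [star_kronecker, ← Matrix.mul_kronecker_mul, hA, hB, Matrix.one_kronecker_one]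

lemma kron_decomp {A : Matrix a a ℂ} {B : Matrix b b ℂ} {V : Matrix a a ℂ} {W : Matrix b b ℂ}
    {lam : a → ℝ} {mu : b → ℝ}
    (hdA : A = V * Matrix.diagonal (fun i => (lam i : ℂ)) * star V)
    (hdB : B = W * Matrix.diagonal (fun j => (mu j : ℂ)) * star W) :
    A ⊗ₖ B = (V ⊗ₖ W) * Matrix.diagonal (fun p : a × b => ((lam p.1 * mu p.2 : ℝ) : ℂ))
      * star (V ⊗ₖ W) := by
  rw [show (fun p : a × b => ((lam p.1 * mu p.2 : ℝ) : ℂ))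
      = fun p : a × b => (lam p.1 : ℂ) * (mu p.2 : ℂ) by funext p; push_cast; ring]
  rw [hdA, hdB, star_kronecker, Matrix.mul_kronecker_mul, Matrix.mul_kronecker_mul,
    Matrix.diagonal_kronecker_diagonal]

/-- entropy of a Kronecker product of states -/
lemma entropy_kron {A : Matrix a a ℂ} {B : Matrix b b ℂ} {V : Matrix a a ℂ} {W : Matrix b b ℂ}
    {lam : a → ℝ} {mu : b → ℝ}
    (hV1 : star V * V = 1) (hV2 : V * star V = 1)
    (hW1 : star W * W = 1) (hW2 : W * star W = 1)
    (hdA : A = V * Matrix.diagonal (fun i => (lam i : ℂ)) * star V)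
    (hdB : B = W * Matrix.diagonal (fun j => (mu j : ℂ)) * star W)
    (hl1 : ∑ i, lam i = 1) (hm1 : ∑ j, mu j = 1) :
    entropy (A ⊗ₖ B) = entropy A + entropy B := by
  rw [entropy_formula (kron_unitary_left hV1 hW1) (kron_unitary_right hV2 hW2)
      (kron_decomp hdA hdB),
    entropy_formula hV1 hV2 hdA, entropy_formula hW1 hW2 hdB]
  rw [neg_sum_mulLog, neg_sum_mulLog, neg_sum_mulLog]
  rw [Fintype.sum_prod_type]
  have h2 : ∀ i : a, ∑ j, Real.negMulLog (lam i * mu j)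
      = Real.negMulLog (lam i) + lam i * ∑ j, Real.negMulLog (mu j) := by
    intro i
    simp_rw [Real.negMulLog_mul]
    rw [Finset.sum_add_distrib, ← Finset.sum_mul, ← Finset.mul_sum, hm1, one_mul]
  simp_rw [h2]
  rw [Finset.sum_add_distrib, ← Finset.sum_mul, hl1, one_mul]

end Kron



section PSD
variable {n : Type*} [Fintype n] [DecidableEq n]

lemma posSemidef_of_decomp (W : Matrix n n ℂ) (c : n → ℝ) (hc : ∀ i, 0 ≤ c i) :
    (W * Matrix.diagonal (fun i => (c i : ℂ)) * star W).PosSemidef := by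
  set D : Matrix n n ℂ := Matrix.diagonal (fun i => ((Real.sqrt (c i) : ℝ) : ℂ)) with hDdef
  have hDh : Dᴴ = D := by
    rw [hDdef, Matrix.diagonal_conjTranspose]
    congr 1
    funext i
    simp [Pi.star_def]
  have hDD : D * D = Matrix.diagonal (fun i => ((c i : ℝ) : ℂ)) := by
    rw [hDdef, Matrix.diagonal_mul_diagonal,
      show (fun i => ((Real.sqrt (c i) : ℝ) : ℂ) * ((Real.sqrt (c i) : ℝ) : ℂ))
        = fun i => ((c i : ℝ) : ℂ) from funext fun i => by
          rw [← Complex.ofReal_mul, Real.mul_self_sqrt (hc i)]]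
  have key : W * Matrix.diagonal (fun i => (c i : ℂ)) * star W = (W * D) * (W * D)ᴴ := by
    rw [Matrix.conjTranspose_mul, hDh, Matrix.star_eq_conjTranspose, ← hDD]
    simp only [Matrix.mul_assoc]
  rw [key]
  exact Matrix.posSemidef_self_mul_conjTranspose _

lemma diag_nonneg_of_posSemidef {A : Matrix n n ℂ} (hA : A.PosSemidef) (m : n) :
    0 ≤ (A m m).re ∧ (A m m).im = 0 := by
  have h := hA.dotProduct_mulVec_nonneg (Pi.single m 1)
  have hval : dotProduct (star (Pi.single m 1)) (A *ᵥ (Pi.single m 1)) = A m m := by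
    simp [dotProduct, Matrix.mulVec, Pi.single_apply, apply_ite (star : ℂ → ℂ),
      Finset.mul_sum, mul_ite, ite_mul]
  rw [hval] at h
  rw [Complex.le_def] at h
  simp only [Complex.zero_re, Complex.zero_im] at h
  exact ⟨h.1, h.2.symm⟩

end PSD

section PT
variable {a b : Type*} [Fintype a] [Fintype b] [DecidableEq a] [DecidableEq b]

lemma trR_trace (ρ : Matrix (a × b) (a × b) ℂ) : (trR ρ).trace = ρ.trace := by
  simp [trR, Matrix.trace, Matrix.diag, Fintype.sum_prod_type]

lemma trL_trace (ρ : Matrix (a × b) (a × b) ℂ) : (trL ρ).trace = ρ.trace := by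
  rw [Matrix.trace, Matrix.trace, Fintype.sum_prod_type]
  rw [Finset.sum_comm]
  simp [trL, Matrix.diag]

lemma trR_isHermitian {ρ : Matrix (a × b) (a × b) ℂ} (h : ρ.IsHermitian) :
    (trR ρ).IsHermitian := by
  ext i j
  rw [Matrix.conjTranspose_apply]
  simp only [trR, Matrix.of_apply, star_sum]
  apply Finset.sum_congr rfl
  intro k _
  rw [← Matrix.conjTranspose_apply, h.eq]

lemma trL_isHermitian {ρ : Matrix (a × b) (a × b) ℂ} (h : ρ.IsHermitian) :
    (trL ρ).IsHermitian := by
  ext i j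
  rw [Matrix.conjTranspose_apply]
  simp only [trL, Matrix.of_apply, star_sum]
  apply Finset.sum_congr rfl
  intro k _
  rw [← Matrix.conjTranspose_apply, h.eq]

lemma trR_posSemidef {ρ : Matrix (a × b) (a × b) ℂ} (h : ρ.PosSemidef) :
    (trR ρ).PosSemidef := by
  refine .of_dotProduct_mulVec_nonneg (trR_isHermitian h.1) fun x => ?_
  have hterm : ∀ k : b, dotProduct (star (fun p : a × b => if p.2 = k then x p.1 else 0))
      (ρ *ᵥ (fun p : a × b => if p.2 = k then x p.1 else 0))
      = ∑ i, ∑ j, star (x i) * (ρ (i, k) (j, k) * x j) := by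
    intro k
    simp only [dotProduct, Matrix.mulVec, Pi.star_apply, Fintype.sum_prod_type,
      apply_ite (star : ℂ → ℂ), star_zero, ite_mul, mul_ite, zero_mul, mul_zero,
      Finset.sum_ite_irrel, Finset.sum_const_zero, Finset.sum_ite_eq', Finset.sum_ite_eq,
      Finset.mem_univ, if_true, Finset.mul_sum]
  have key : dotProduct (star x) (trR ρ *ᵥ x)
      = ∑ k, dotProduct (star (fun p : a × b => if p.2 = k then x p.1 else 0))
          (ρ *ᵥ (fun p : a × b => if p.2 = k then x p.1 else 0)) :=
    calc dotProduct (star x) (trR ρ *ᵥ x)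
        = ∑ i, ∑ j, ∑ k, star (x i) * (ρ (i, k) (j, k) * x j) := by
          simp only [dotProduct, Matrix.mulVec, trR, Matrix.of_apply, Pi.star_apply,
            Finset.mul_sum, Finset.sum_mul]
    _ = ∑ k, ∑ i, ∑ j, star (x i) * (ρ (i, k) (j, k) * x j) := sum_swap3 _
    _ = _ := Finset.sum_congr rfl fun k _ => (hterm k).symm
  rw [key]
  exact Finset.sum_nonneg fun k _ => h.dotProduct_mulVec_nonneg _

lemma trL_posSemidef {ρ : Matrix (a × b) (a × b) ℂ} (h : ρ.PosSemidef) :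
    (trL ρ).PosSemidef := by
  refine .of_dotProduct_mulVec_nonneg (trL_isHermitian h.1) fun x => ?_
  have hterm : ∀ k : a, dotProduct (star (fun p : a × b => if p.1 = k then x p.2 else 0))
      (ρ *ᵥ (fun p : a × b => if p.1 = k then x p.2 else 0))
      = ∑ i, ∑ j, star (x i) * (ρ (k, i) (k, j) * x j) := by
    intro k
    simp only [dotProduct, Matrix.mulVec, Pi.star_apply, Fintype.sum_prod_type,
      apply_ite (star : ℂ → ℂ), star_zero, ite_mul, mul_ite, zero_mul, mul_zero,
      Finset.sum_ite_irrel, Finset.sum_const_zero, Finset.sum_ite_eq', Finset.sum_ite_eq,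
      Finset.mem_univ, if_true, Finset.mul_sum]
  have key : dotProduct (star x) (trL ρ *ᵥ x)
      = ∑ k, dotProduct (star (fun p : a × b => if p.1 = k then x p.2 else 0))
          (ρ *ᵥ (fun p : a × b => if p.1 = k then x p.2 else 0)) :=
    calc dotProduct (star x) (trL ρ *ᵥ x)
        = ∑ i, ∑ j, ∑ k, star (x i) * (ρ (k, i) (k, j) * x j) := by
          simp only [dotProduct, Matrix.mulVec, trL, Matrix.of_apply, Pi.star_apply,
            Finset.mul_sum, Finset.sum_mul]
    _ = ∑ k, ∑ i, ∑ j, star (x i) * (ρ (k, i) (k, j) * x j) := sum_swap3 _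
    _ = _ := Finset.sum_congr rfl fun k _ => (hterm k).symm
  rw [key]
  exact Finset.sum_nonneg fun k _ => h.dotProduct_mulVec_nonneg _

lemma trR_conjL (ρ : Matrix (a × b) (a × b) ℂ) (V : Matrix a a ℂ) :
    trR ((star V ⊗ₖ (1 : Matrix b b ℂ)) * ρ * (V ⊗ₖ 1)) = star V * trR ρ * V := by
  ext i j
  simp only [trR, Matrix.of_apply, Matrix.mul_apply, Matrix.kroneckerMap_apply,
    Matrix.one_apply, Fintype.sum_prod_type, mul_ite, ite_mul, mul_zero, zero_mul, mul_one, one_mul,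
    Finset.sum_ite_irrel, Finset.sum_const_zero, Finset.sum_ite_eq', Finset.sum_ite_eq,
    Finset.mem_univ, if_true, Finset.mul_sum, Finset.sum_mul]
  exact (sum_swap3 _).symm

lemma trR_conjR (ρ : Matrix (a × b) (a × b) ℂ) (W : Matrix b b ℂ) (hW : W * star W = 1) :
    trR (((1 : Matrix a a ℂ) ⊗ₖ star W) * ρ * (1 ⊗ₖ W)) = trR ρ := by
  ext i j
  simp only [trR, Matrix.of_apply, Matrix.mul_apply, Matrix.kroneckerMap_apply,
    Matrix.one_apply, Fintype.sum_prod_type, mul_ite, ite_mul, mul_zero, zero_mul, mul_one, one_mul,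
    Finset.sum_ite_irrel, Finset.sum_const_zero, Finset.sum_ite_eq', Finset.sum_ite_eq,
    Finset.mem_univ, if_true, Finset.mul_sum, Finset.sum_mul]
  rw [← sum_swap3]
  have hcontr : ∀ x1 x2 : b, ∑ x, star W x x2 * ρ (i, x2) (j, x1) * W x1 x
      = (if x1 = x2 then (1 : ℂ) else 0) * ρ (i, x2) (j, x1) := by
    intro x1 x2
    rw [← Matrix.one_apply (i := x1) (j := x2), ← hW, Matrix.mul_apply, Finset.sum_mul]
    apply Finset.sum_congr rfl
    intros; ring
  simp_rw [hcontr, ite_mul, one_mul, zero_mul, Finset.sum_ite_eq, Finset.mem_univ, if_true]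

lemma trL_conjR (ρ : Matrix (a × b) (a × b) ℂ) (W : Matrix b b ℂ) :
    trL (((1 : Matrix a a ℂ) ⊗ₖ star W) * ρ * (1 ⊗ₖ W)) = star W * trL ρ * W := by
  ext i j
  simp only [trL, Matrix.of_apply, Matrix.mul_apply, Matrix.kroneckerMap_apply,
    Matrix.one_apply, Fintype.sum_prod_type, mul_ite, ite_mul, mul_zero, zero_mul, mul_one, one_mul,
    Finset.sum_ite_irrel, Finset.sum_const_zero, Finset.sum_ite_eq', Finset.sum_ite_eq,
    Finset.mem_univ, if_true, Finset.mul_sum, Finset.sum_mul]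
  exact (sum_swap3 _).symm

lemma trL_conjL (ρ : Matrix (a × b) (a × b) ℂ) (V : Matrix a a ℂ) (hV : V * star V = 1) :
    trL ((star V ⊗ₖ (1 : Matrix b b ℂ)) * ρ * (V ⊗ₖ 1)) = trL ρ := by
  ext i j
  simp only [trL, Matrix.of_apply, Matrix.mul_apply, Matrix.kroneckerMap_apply,
    Matrix.one_apply, Fintype.sum_prod_type, mul_ite, ite_mul, mul_zero, zero_mul, mul_one, one_mul,
    Finset.sum_ite_irrel, Finset.sum_const_zero, Finset.sum_ite_eq', Finset.sum_ite_eq,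
    Finset.mem_univ, if_true, Finset.mul_sum, Finset.sum_mul]
  rw [← sum_swap3]
  have hcontr : ∀ x1 x2 : a, ∑ x, star V x x2 * ρ (x2, i) (x1, j) * V x1 x
      = (if x1 = x2 then (1 : ℂ) else 0) * ρ (x2, i) (x1, j) := by
    intro x1 x2
    rw [← Matrix.one_apply (i := x1) (j := x2), ← hV, Matrix.mul_apply, Finset.sum_mul]
    apply Finset.sum_congr rfl
    intros; ring
  simp_rw [hcontr, ite_mul, one_mul, zero_mul, Finset.sum_ite_eq, Finset.mem_univ, if_true]

lemma trR_conj_kron (ρ : Matrix (a × b) (a × b) ℂ) (V : Matrix a a ℂ) (W : Matrix b b ℂ)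
    (hW : W * star W = 1) :
    trR (star (V ⊗ₖ W) * ρ * (V ⊗ₖ W)) = star V * trR ρ * V := by
  have hfac1 : star (V ⊗ₖ W) = (star V ⊗ₖ (1 : Matrix b b ℂ)) * ((1 : Matrix a a ℂ) ⊗ₖ star W) := by
    rw [star_kronecker, ← Matrix.mul_kronecker_mul, Matrix.mul_one, Matrix.one_mul]
  have hfac2 : V ⊗ₖ W = ((1 : Matrix a a ℂ) ⊗ₖ W) * (V ⊗ₖ (1 : Matrix b b ℂ)) := by
    rw [← Matrix.mul_kronecker_mul, Matrix.mul_one, Matrix.one_mul]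
  rw [hfac1, hfac2, show (star V ⊗ₖ (1 : Matrix b b ℂ)) * ((1 : Matrix a a ℂ) ⊗ₖ star W) * ρ *
      (((1 : Matrix a a ℂ) ⊗ₖ W) * (V ⊗ₖ (1 : Matrix b b ℂ)))
      = (star V ⊗ₖ (1 : Matrix b b ℂ)) * (((1 : Matrix a a ℂ) ⊗ₖ star W) * ρ *
        ((1 : Matrix a a ℂ) ⊗ₖ W)) * (V ⊗ₖ (1 : Matrix b b ℂ)) by simp only [Matrix.mul_assoc],
    trR_conjL, trR_conjR _ _ hW]

lemma trL_conj_kron (ρ : Matrix (a × b) (a × b) ℂ) (V : Matrix a a ℂ) (W : Matrix b b ℂ)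
    (hV : V * star V = 1) :
    trL (star (V ⊗ₖ W) * ρ * (V ⊗ₖ W)) = star W * trL ρ * W := by
  have hfac1 : star (V ⊗ₖ W) = ((1 : Matrix a a ℂ) ⊗ₖ star W) * (star V ⊗ₖ (1 : Matrix b b ℂ)) := by
    rw [star_kronecker, ← Matrix.mul_kronecker_mul, Matrix.mul_one, Matrix.one_mul]
  have hfac2 : V ⊗ₖ W = (V ⊗ₖ (1 : Matrix b b ℂ)) * ((1 : Matrix a a ℂ) ⊗ₖ W) := by
    rw [← Matrix.mul_kronecker_mul, Matrix.mul_one, Matrix.one_mul]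
  rw [hfac1, hfac2, show ((1 : Matrix a a ℂ) ⊗ₖ star W) * (star V ⊗ₖ (1 : Matrix b b ℂ)) * ρ *
      ((V ⊗ₖ (1 : Matrix b b ℂ)) * ((1 : Matrix a a ℂ) ⊗ₖ W))
      = ((1 : Matrix a a ℂ) ⊗ₖ star W) * ((star V ⊗ₖ (1 : Matrix b b ℂ)) * ρ *
        (V ⊗ₖ (1 : Matrix b b ℂ))) * ((1 : Matrix a a ℂ) ⊗ₖ W) by simp only [Matrix.mul_assoc],
    trL_conjR, trL_conjL _ _ hV]

end PT

section Jensen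
variable {n : Type*} [Fintype n] [DecidableEq n]

lemma entropy_le_diag {τ : Matrix n n ℂ} (hτ : τ.PosSemidef) :
    entropy τ ≤ ∑ m, Real.negMulLog ((τ m m).re) := by
  have h := hτ.1
  set lam := h.eigenvalues with hlam
  set X := (h.eigenvectorUnitary : Matrix n n ℂ) with hX
  set Q : n → n → ℝ := fun m k => Complex.normSq (X m k) with hQdef
  have hQ0 : ∀ m k, 0 ≤ Q m k := fun m k => Complex.normSq_nonneg _
  have hrow : ∀ m, ∑ k, Q m k = 1 := by
    intro m
    have h1 := Matrix.ext_iff.mpr (mul_star_self_eigU h) m m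
    rw [Matrix.mul_apply, Matrix.one_apply_eq] at h1
    have h2 : ∀ k, X m k * (star X) k m = ((Q m k : ℝ) : ℂ) := by
      intro k
      rw [Matrix.star_apply, Complex.star_def, Complex.mul_conj]
    rw [Finset.sum_congr rfl fun k _ => h2 k] at h1
    have h3 := congrArg Complex.re h1
    simpa [Complex.re_sum] using h3
  have hcol : ∀ k, ∑ m, Q m k = 1 := by
    intro k
    have h1 := Matrix.ext_iff.mpr (star_mul_self_eigU h) k k
    rw [Matrix.mul_apply, Matrix.one_apply_eq] at h1
    have h2 : ∀ m, (star X) k m * X m k = ((Q m k : ℝ) : ℂ) := by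
      intro m
      rw [Matrix.star_apply, Complex.star_def, mul_comm, Complex.mul_conj]
    rw [Finset.sum_congr rfl fun m _ => h2 m] at h1
    have h3 := congrArg Complex.re h1
    simpa [Complex.re_sum] using h3
  have hlam0 : ∀ k, 0 ≤ lam k := fun k => hτ.eigenvalues_nonneg k
  have hdiag : ∀ m, (τ m m).re = ∑ k, Q m k * lam k := by
    intro m
    have h1 := Matrix.ext_iff.mpr (spectral_decomp h) m m
    rw [Matrix.mul_apply] at h1
    rw [← hX, ← hlam] at h1
    have h2 : ∀ k, (X * Matrix.diagonal fun i => ((lam i : ℝ) : ℂ)) m k * (star X) k m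
        = ((Q m k * lam k : ℝ) : ℂ) := by
      intro k
      rw [Matrix.mul_diagonal, Matrix.star_apply, Complex.star_def]
      rw [show X m k * (lam k : ℂ) * (starRingEnd ℂ) (X m k)
          = (X m k * (starRingEnd ℂ) (X m k)) * (lam k : ℂ) by ring, Complex.mul_conj]
      rw [hQdef]
      push_cast
      ring
    rw [Finset.sum_congr rfl fun k _ => h2 k] at h1
    have h3 := congrArg Complex.re h1
    rw [Complex.re_sum] at h3
    rw [h3]
    exact Finset.sum_congr rfl fun k _ => Complex.ofReal_re _
  have hent : entropy τ = ∑ k, Real.negMulLog (lam k) := by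
    rw [entropy_eq_sum h, neg_sum_mulLog]
  rw [hent]
  have hjen : ∀ m, ∑ k, Q m k * Real.negMulLog (lam k)
      ≤ Real.negMulLog (∑ k, Q m k * lam k) := by
    intro m
    have := Real.concaveOn_negMulLog.le_map_sum (t := Finset.univ) (w := fun k => Q m k)
      (p := lam) (fun k _ => hQ0 m k) (hrow m) (fun k _ => hlam0 k)
    simpa [smul_eq_mul] using this
  calc ∑ k, Real.negMulLog (lam k) = ∑ k, (∑ m, Q m k) * Real.negMulLog (lam k) := by
        apply Finset.sum_congr rfl
        intro k _
        rw [hcol k, one_mul]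
    _ = ∑ m, ∑ k, Q m k * Real.negMulLog (lam k) := by
        rw [Finset.sum_comm]
        apply Finset.sum_congr rfl
        intro k _
        rw [Finset.sum_mul]
    _ ≤ ∑ m, Real.negMulLog (∑ k, Q m k * lam k) := Finset.sum_le_sum fun m _ => hjen m
    _ = ∑ m, Real.negMulLog ((τ m m).re) := by
        apply Finset.sum_congr rfl
        intro m _
        rw [hdiag m]

end Jensen

lemma classical_subadd {ι κ : Type*} [Fintype ι] [Fintype κ] (p : ι → κ → ℝ) (q : ι → ℝ)
    (r : κ → ℝ) (hp : ∀ i j, 0 ≤ p i j) (hq : ∀ i, q i = ∑ j, p i j)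
    (hr : ∀ j, r j = ∑ i, p i j) (hq1 : ∑ i, q i = 1) :
    ∑ i, ∑ j, Real.negMulLog (p i j)
      ≤ ∑ i, Real.negMulLog (q i) + ∑ j, Real.negMulLog (r j) := by
  have hr1 : ∑ j, r j = 1 := by
    rw [Finset.sum_congr rfl fun j (_ : j ∈ Finset.univ) => hr j, Finset.sum_comm, ← hq1]
    exact Finset.sum_congr rfl fun i _ => (hq i).symm
  have key : ∀ i j, p i j - q i * r j
      ≤ p i j * Real.log (p i j) - p i j * Real.log (q i) - p i j * Real.log (r j) := by
    intro i j
    by_cases hp0 : p i j = 0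
    · simp only [hp0, zero_mul, zero_sub, sub_zero, neg_zero, zero_sub, sub_zero]
      have : 0 ≤ q i * r j := mul_nonneg (hq i ▸ Finset.sum_nonneg fun j _ => hp i j)
        (hr j ▸ Finset.sum_nonneg fun i _ => hp i j)
      linarith
    · have hppos : 0 < p i j := lt_of_le_of_ne (hp i j) (Ne.symm hp0)
      have hqpos : 0 < q i :=
        lt_of_lt_of_le hppos (hq i ▸ Finset.single_le_sum (fun j _ => hp i j) (Finset.mem_univ j))
      have hrpos : 0 < r j :=
        lt_of_lt_of_le hppos (hr j ▸ Finset.single_le_sum (fun i _ => hp i j) (Finset.mem_univ i))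
      have hlog := Real.log_le_sub_one_of_pos
        (show 0 < q i * r j / p i j from div_pos (mul_pos hqpos hrpos) hppos)
      rw [Real.log_div (ne_of_gt (mul_pos hqpos hrpos)) hp0,
        Real.log_mul (ne_of_gt hqpos) (ne_of_gt hrpos)] at hlog
      have h2 : p i j * (q i * r j / p i j) = q i * r j := by field_simp
      nlinarith [mul_le_mul_of_nonneg_left hlog hppos.le]
  have hsum : ∑ i, ∑ j, (p i j - q i * r j)
      ≤ ∑ i, ∑ j, (p i j * Real.log (p i j) - p i j * Real.log (q i) - p i j * Real.log (r j)) :=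
    Finset.sum_le_sum fun i _ => Finset.sum_le_sum fun j _ => key i j
  have h1 : ∑ i, ∑ j, p i j = 1 := by
    rw [← hq1]; exact Finset.sum_congr rfl fun i _ => (hq i).symm
  have h2 : ∑ i : ι, ∑ j : κ, q i * r j = 1 := by
    have hc : ∀ i, ∑ j, q i * r j = q i := by
      intro i
      rw [← Finset.mul_sum, hr1, mul_one]
    rw [Finset.sum_congr rfl fun i _ => hc i, hq1]
  have hq' : ∑ i, ∑ j, p i j * Real.log (q i) = ∑ i, q i * Real.log (q i) := by
    apply Finset.sum_congr rfl
    intro i _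
    rw [← Finset.sum_mul, ← hq i]
  have hr' : ∑ i, ∑ j, p i j * Real.log (r j) = ∑ j, r j * Real.log (r j) := by
    rw [Finset.sum_comm]
    apply Finset.sum_congr rfl
    intro j _
    rw [← Finset.sum_mul, ← hr j]
  simp only [Finset.sum_sub_distrib] at hsum
  rw [hq', hr', h1, h2] at hsum
  have goal' : -∑ i, ∑ j, p i j * Real.log (p i j)
      ≤ (-∑ i, q i * Real.log (q i)) + (-∑ j, r j * Real.log (r j)) := by linarith
  calc ∑ i, ∑ j, Real.negMulLog (p i j) = ∑ i, -∑ j, p i j * Real.log (p i j) := by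
        apply Finset.sum_congr rfl
        intro i _
        rw [neg_sum_mulLog]
    _ = -∑ i, ∑ j, p i j * Real.log (p i j) := by rw [← Finset.sum_neg_distrib]
    _ ≤ (-∑ i, q i * Real.log (q i)) + (-∑ j, r j * Real.log (r j)) := goal'
    _ = ∑ i, Real.negMulLog (q i) + ∑ j, Real.negMulLog (r j) := by
        rw [neg_sum_mulLog, neg_sum_mulLog]

lemma subadditivity {a b : Type*} [Fintype a] [Fintype b] [DecidableEq a] [DecidableEq b]
    {ρ : Matrix (a × b) (a × b) ℂ} (hρ : IsState ρ) :
    entropy ρ ≤ entropy (trR ρ) + entropy (trL ρ) := by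
  obtain ⟨hPSD, htr⟩ := hρ
  have hA : (trR ρ).PosSemidef := trR_posSemidef hPSD
  have hB : (trL ρ).PosSemidef := trL_posSemidef hPSD
  set q : a → ℝ := hA.1.eigenvalues with hqdef
  set r : b → ℝ := hB.1.eigenvalues with hrdef
  set V : Matrix a a ℂ := (hA.1.eigenvectorUnitary : Matrix a a ℂ) with hVdef
  set W : Matrix b b ℂ := (hB.1.eigenvectorUnitary : Matrix b b ℂ) with hWdef
  set T : Matrix (a × b) (a × b) ℂ := V ⊗ₖ W with hTdef
  have hT1 : star T * T = 1 := kron_unitary_left (star_mul_self_eigU hA.1) (star_mul_self_eigU hB.1)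
  have hT2 : T * star T = 1 :=
    kron_unitary_right (mul_star_self_eigU hA.1) (mul_star_self_eigU hB.1)
  set τ : Matrix (a × b) (a × b) ℂ := star T * ρ * T with hτdef
  have hτPSD : τ.PosSemidef := by
    have h0 := hPSD.mul_mul_conjTranspose_same (star T)
    rwa [show (star T)ᴴ = T by rw [← Matrix.star_eq_conjTranspose, star_star]] at h0
  have hSτ : entropy τ = entropy ρ := by
    have hrw : τ = star T * ρ * star (star T) := by rw [star_star]
    rw [hrw]
    exact entropy_conj (star_mul_self_eigU hPSD.1) (mul_star_self_eigU hPSD.1)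
      (by rw [star_star]; exact hT2) (by rw [star_star]; exact hT1) (spectral_decomp hPSD.1)
  have htrRτ : trR τ = Matrix.diagonal (fun i => ((q i : ℝ) : ℂ)) := by
    rw [hτdef, hTdef, trR_conj_kron _ _ _ (mul_star_self_eigU hB.1), hVdef]
    have h0 := hA.1.conjStarAlgAut_star_eigenvectorUnitary
    rw [Unitary.conjStarAlgAut_star_apply] at h0
    rw [h0]
    rfl
  have htrLτ : trL τ = Matrix.diagonal (fun j => ((r j : ℝ) : ℂ)) := by
    rw [hτdef, hTdef, trL_conj_kron _ _ _ (mul_star_self_eigU hA.1), hWdef]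
    have h0 := hB.1.conjStarAlgAut_star_eigenvectorUnitary
    rw [Unitary.conjStarAlgAut_star_apply] at h0
    rw [h0]
    rfl
  have hq : ∀ i, q i = ∑ k, (τ (i, k) (i, k)).re := by
    intro i
    have h1 := Matrix.ext_iff.mpr htrRτ i i
    rw [Matrix.diagonal_apply_eq] at h1
    have h2 : trR τ i i = ∑ k, τ (i, k) (i, k) := rfl
    rw [h2] at h1
    have h3 := congrArg Complex.re h1
    rw [Complex.re_sum, Complex.ofReal_re] at h3
    exact h3.symm
  have hr : ∀ j, r j = ∑ k, (τ (k, j) (k, j)).re := by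
    intro j
    have h1 := Matrix.ext_iff.mpr htrLτ j j
    rw [Matrix.diagonal_apply_eq] at h1
    have h2 : trL τ j j = ∑ k, τ (k, j) (k, j) := rfl
    rw [h2] at h1
    have h3 := congrArg Complex.re h1
    rw [Complex.re_sum, Complex.ofReal_re] at h3
    exact h3.symm
  have hq1 : ∑ i, q i = 1 := by
    rw [hqdef, sum_eigenvalues_eq_trace hA.1, trR_trace, htr, Complex.one_re]
  have hp0 : ∀ (i : a) (k : b), 0 ≤ (τ (i, k) (i, k)).re :=
    fun i k => (diag_nonneg_of_posSemidef hτPSD (i, k)).1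
  have hentA : entropy (trR ρ) = ∑ i, Real.negMulLog (q i) := by
    rw [entropy_eq_sum hA.1, neg_sum_mulLog]
  have hentB : entropy (trL ρ) = ∑ j, Real.negMulLog (r j) := by
    rw [entropy_eq_sum hB.1, neg_sum_mulLog]
  calc entropy ρ = entropy τ := hSτ.symm
    _ ≤ ∑ m : a × b, Real.negMulLog ((τ m m).re) := entropy_le_diag hτPSD
    _ = ∑ i, ∑ k, Real.negMulLog ((τ (i, k) (i, k)).re) := Fintype.sum_prod_type _
    _ ≤ ∑ i, Real.negMulLog (q i) + ∑ j, Real.negMulLog (r j) :=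
        classical_subadd _ q r hp0 hq hr hq1
    _ = entropy (trR ρ) + entropy (trL ρ) := by rw [hentA, hentB]



theorem second_law_with_memory {dS dM d : ℕ}
    (ρSM : Matrix (Fin dS × Fin dM) (Fin dS × Fin dM) ℂ) (hSM : IsState ρSM)
    (ρR : Matrix (Fin d) (Fin d) ℂ) (hR : IsState ρR)
    (U : Matrix ((Fin dS × Fin dM) × Fin d) ((Fin dS × Fin dM) × Fin d) ℂ)
    (hU : U ∈ Matrix.unitaryGroup ((Fin dS × Fin dM) × Fin d) ℂ) :
    let ρ' := U * (ρSM ⊗ₖ ρR) * star U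
    let Δ := entropy (trL ρ') - entropy ρR
    let ΔScond := (entropy ρSM - entropy (trL ρSM)) -
      (entropy (trR ρ') - entropy (trL (trR ρ')))
    entropy (trL (trR ρ')) ≤ entropy (trL ρSM) →
      ΔScond + mutInfo ρ' ≤ Δ ∧ ΔScond ≤ ΔScond + mutInfo ρ' := by
  intro ρ' Δ ΔScond hH
  obtain ⟨hSMp, hSMt⟩ := hSM
  obtain ⟨hRp, hRt⟩ := hR
  have hU1 : star U * U = 1 := Matrix.mem_unitaryGroup_iff'.mp hU
  have hU2 : U * star U = 1 := Matrix.mem_unitaryGroup_iff.mp hU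
  have hdSM := spectral_decomp hSMp.1
  have hdR := spectral_decomp hRp.1
  set VSM := (hSMp.1.eigenvectorUnitary : Matrix (Fin dS × Fin dM) (Fin dS × Fin dM) ℂ)
  set VR := (hRp.1.eigenvectorUnitary : Matrix (Fin d) (Fin d) ℂ)
  have hkdec : ρSM ⊗ₖ ρR = (VSM ⊗ₖ VR) *
      Matrix.diagonal (fun p => ((hSMp.1.eigenvalues p.1 * hRp.1.eigenvalues p.2 : ℝ) : ℂ)) *
      star (VSM ⊗ₖ VR) := kron_decomp hdSM hdR
  have hkin1 : star (VSM ⊗ₖ VR) * (VSM ⊗ₖ VR) = 1 :=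
    kron_unitary_left (star_mul_self_eigU hSMp.1) (star_mul_self_eigU hRp.1)
  have hkin2 : (VSM ⊗ₖ VR) * star (VSM ⊗ₖ VR) = 1 :=
    kron_unitary_right (mul_star_self_eigU hSMp.1) (mul_star_self_eigU hRp.1)
  have hsum_SM : ∑ i, hSMp.1.eigenvalues i = 1 := by
    rw [sum_eigenvalues_eq_trace, hSMt, Complex.one_re]
  have hsum_R : ∑ i, hRp.1.eigenvalues i = 1 := by
    rw [sum_eigenvalues_eq_trace, hRt, Complex.one_re]
  have hrfl : ρ' = U * (ρSM ⊗ₖ ρR) * star U := rfl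
  have hE1 : entropy ρ' = entropy ρSM + entropy ρR := by
    rw [hrfl, entropy_conj hkin1 hkin2 hU1 hU2 hkdec]
    exact entropy_kron (star_mul_self_eigU hSMp.1) (mul_star_self_eigU hSMp.1)
      (star_mul_self_eigU hRp.1) (mul_star_self_eigU hRp.1) hdSM hdR hsum_SM hsum_R
  have hstate' : IsState ρ' := by
    constructor
    · have hk : (ρSM ⊗ₖ ρR).PosSemidef := by
        rw [hkdec]
        exact posSemidef_of_decomp _ _ fun p =>
          mul_nonneg (hSMp.eigenvalues_nonneg p.1) (hRp.eigenvalues_nonneg p.2)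
      have h0 := hk.mul_mul_conjTranspose_same U
      rwa [← Matrix.star_eq_conjTranspose] at h0
    · rw [hrfl, trace_conj hU1, Matrix.trace_kronecker, hSMt, hRt, one_mul]
  have hsub : entropy ρ' ≤ entropy (trR ρ') + entropy (trL ρ') := subadditivity hstate'
  have hmut : mutInfo ρ' = entropy (trR ρ') + entropy (trL ρ') - entropy ρ' := rfl
  have hΔ : Δ = entropy (trL ρ') - entropy ρR := rfl
  have hSc : ΔScond = (entropy ρSM - entropy (trL ρSM)) -
      (entropy (trR ρ') - entropy (trL (trR ρ'))) := rfl
  constructor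
  · rw [hmut, hΔ, hSc]
    linarith
  · rw [hmut]
    linarith
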